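/- For the smooth integral-type projection Π̃_η f(x) = (∫f dx − I(f)) + ∫_0^x g̃(ξ)dξ, where g̃ = Σ_i f'(a_i) φ_i and I(f) = Σ_i f'(a_i) ∫_0^1(∫_0^x φ_i dξ) dx, and f ∈ C^2([0,1]): (1) ‖f' − g̃‖_∞ ≤ ‖f''‖_∞/m; (2) ‖Π̃_η f − f‖_∞ ≤ ‖f''‖_∞/m; (3) ‖Π̃_η f − f‖_{C^1} ≤ 3‖f''‖_∞/m; (4) ∫_0^1 Π̃_η f dx = ∫_0^1 f dx; (5) ‖Π̃_η f‖_{C^2} ≤ 5‖f‖_{C^2}. -/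

import Mathlib

open Set Filter


noncomputable def phiF (x : ℝ) : ℝ :=
  if x < -1 then 0 else if x ≤ 0 then 1 - 3 * x ^ 2 - 2 * x ^ 3
  else if x ≤ 1 then 1 - 3 * x ^ 2 + 2 * x ^ 3 else 0

noncomputable def DphiF (x : ℝ) : ℝ :=
  if x < -1 then 0 else if x ≤ 0 then -6 * x - 6 * x ^ 2
  else if x ≤ 1 then -6 * x + 6 * x ^ 2 else 0

lemma phiF_nonneg (s : ℝ) : 0 ≤ phiF s := by
  unfold phiF
  split_ifs with h1 h2 h3
  · exact le_refl _
  · push_neg at h1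
    nlinarith [mul_nonneg (sq_nonneg (1 + s)) (by linarith : (0:ℝ) ≤ 1 - 2 * s)]
  · push_neg at h2
    nlinarith [mul_nonneg (sq_nonneg (1 - s)) (by linarith : (0:ℝ) ≤ 1 + 2 * s)]
  · exact le_refl _

lemma phiF_le_one (s : ℝ) : phiF s ≤ 1 := by
  unfold phiF
  split_ifs with h1 h2 h3
  · norm_num
  · push_neg at h1
    nlinarith [mul_nonneg (sq_nonneg s) (by linarith : (0:ℝ) ≤ 3 + 2 * s)]
  · push_neg at h2
    nlinarith [mul_nonneg (sq_nonneg s) (by linarith : (0:ℝ) ≤ 3 - 2 * s)]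
  · norm_num


lemma phiF_zero (s : ℝ) (h : 1 ≤ |s|) : phiF s = 0 := by
  rcases le_abs.mp h with h' | h'
  · rcases eq_or_lt_of_le h' with rfl | hlt
    · norm_num [phiF]
    · unfold phiF
      rw [if_neg (by linarith), if_neg (by linarith), if_neg (by linarith)]
  · have hs1 : s ≤ -1 := by linarith
    rcases eq_or_lt_of_le hs1 with rfl | hlt
    · norm_num [phiF]
    · unfold phiF; rw [if_pos hlt]

lemma DphiF_zero (s : ℝ) (h : 1 ≤ |s|) : DphiF s = 0 := by
  rcases le_abs.mp h with h' | h'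
  · rcases eq_or_lt_of_le h' with rfl | hlt
    · norm_num [DphiF]
    · unfold DphiF
      rw [if_neg (by linarith), if_neg (by linarith), if_neg (by linarith)]
  · have hs1 : s ≤ -1 := by linarith
    rcases eq_or_lt_of_le hs1 with rfl | hlt
    · norm_num [DphiF]
    · unfold DphiF; rw [if_pos hlt]

lemma DphiF_abs_le (s : ℝ) : |DphiF s| ≤ 3 / 2 := by
  unfold DphiF
  split_ifs with h1 h2 h3 <;> rw [abs_le] <;> (try push_neg at *) <;> constructor <;>
    nlinarith [sq_nonneg (2*s+1), sq_nonneg (2*s-1)]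

lemma phiF_eval_pos {s : ℝ} (h0 : 0 < s) (h1 : s ≤ 1) :
    phiF s = 1 - 3 * s ^ 2 + 2 * s ^ 3 := by
  unfold phiF; rw [if_neg (by linarith), if_neg (by linarith), if_pos h1]

lemma phiF_eval_neg {s : ℝ} (h0 : -1 ≤ s) (h1 : s ≤ 0) :
    phiF s = 1 - 3 * s ^ 2 - 2 * s ^ 3 := by
  unfold phiF; rw [if_neg (by linarith), if_pos h1]

lemma DphiF_eval_pos {s : ℝ} (h0 : 0 < s) (h1 : s ≤ 1) :
    DphiF s = -6 * s + 6 * s ^ 2 := by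
  unfold DphiF; rw [if_neg (by linarith), if_neg (by linarith), if_pos h1]

lemma DphiF_eval_neg {s : ℝ} (h0 : -1 ≤ s) (h1 : s ≤ 0) :
    DphiF s = -6 * s - 6 * s ^ 2 := by
  unfold DphiF; rw [if_neg (by linarith), if_pos h1]

lemma phiF_add {s : ℝ} (hs : s ∈ Icc (0:ℝ) 1) : phiF s + phiF (s - 1) = 1 := by
  obtain ⟨h0, h1⟩ := hs
  rcases eq_or_lt_of_le h0 with rfl | hpos
  · norm_num [phiF]
  · rw [phiF_eval_pos hpos h1, phiF_eval_neg (by linarith) (by linarith)]; ring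

lemma DphiF_add {s : ℝ} (hs : s ∈ Icc (0:ℝ) 1) : DphiF s + DphiF (s - 1) = 0 := by
  obtain ⟨h0, h1⟩ := hs
  rcases eq_or_lt_of_le h0 with rfl | hpos
  · norm_num [DphiF]
  · rw [DphiF_eval_pos hpos h1, DphiF_eval_neg (by linarith) (by linarith)]; ring

lemma cubic_neg (s : ℝ) :
    HasDerivAt (fun x : ℝ => 1 - 3 * x ^ 2 - 2 * x ^ 3) (-6 * s - 6 * s ^ 2) s := by
  have := ((hasDerivAt_const s (1:ℝ)).sub ((hasDerivAt_pow 2 s).const_mul 3)).sub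
    ((hasDerivAt_pow 3 s).const_mul 2)
  refine this.congr_deriv ?_
  push_cast; ring

lemma cubic_pos (s : ℝ) :
    HasDerivAt (fun x : ℝ => 1 - 3 * x ^ 2 + 2 * x ^ 3) (-6 * s + 6 * s ^ 2) s := by
  have := ((hasDerivAt_const s (1:ℝ)).sub ((hasDerivAt_pow 2 s).const_mul 3)).add
    ((hasDerivAt_pow 3 s).const_mul 2)
  refine this.congr_deriv ?_
  push_cast; ring

lemma glueDeriv {h p q : ℝ → ℝ} {a d : ℝ}
    (hp : ∀ᶠ x in nhdsWithin a (Iic a), h x = p x)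
    (hq : ∀ᶠ x in nhdsWithin a (Ici a), h x = q x)
    (hpd : HasDerivAt p d a) (hqd : HasDerivAt q d a)
    (hpa : h a = p a) (hqa : h a = q a) : HasDerivAt h d a := by
  have h1 : HasDerivWithinAt h d (Iic a) a :=
    (hpd.hasDerivWithinAt).congr_of_eventuallyEq hp hpa
  have h2 : HasDerivWithinAt h d (Ici a) a :=
    (hqd.hasDerivWithinAt).congr_of_eventuallyEq hq hqa
  have := h1.union h2
  rw [Iic_union_Ici] at this
  exact hasDerivWithinAt_univ.mp this

lemma phiF_eval_pos' {s : ℝ} (h0 : 0 ≤ s) (h1 : s ≤ 1) :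
    phiF s = 1 - 3 * s ^ 2 + 2 * s ^ 3 := by
  rcases eq_or_lt_of_le h0 with rfl | h
  · norm_num [phiF]
  · exact phiF_eval_pos h h1

lemma phiF_hasDerivAt (s : ℝ) : HasDerivAt phiF (DphiF s) s := by
  rcases lt_trichotomy s (-1) with h | h | h
  · have he : ∀ᶠ x in nhds s, phiF x = (fun _ : ℝ => (0:ℝ)) x := by
      filter_upwards [Iio_mem_nhds h] with x hx
      have hx' := mem_Iio.mp hx
      exact phiF_zero x (by rw [abs_of_neg (by linarith)]; linarith)
    rw [DphiF_zero s (by rw [abs_of_neg (by linarith)]; linarith)]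
    exact (hasDerivAt_const s 0).congr_of_eventuallyEq he
  · subst h
    rw [DphiF_zero (-1) (by norm_num)]
    apply glueDeriv (p := fun _ => (0:ℝ)) (q := fun x => 1 - 3 * x ^ 2 - 2 * x ^ 3)
    · filter_upwards [self_mem_nhdsWithin] with x hx
      exact phiF_zero x (by rw [abs_of_nonpos (by linarith [mem_Iic.mp hx])]; linarith [mem_Iic.mp hx])
    · filter_upwards [self_mem_nhdsWithin,
        mem_nhdsWithin_of_mem_nhds (Iio_mem_nhds (by norm_num : (-1:ℝ) < 0))] with x hx1 hx2
      exact phiF_eval_neg (mem_Ici.mp hx1) (le_of_lt hx2)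
    · exact hasDerivAt_const _ _
    · convert cubic_neg (-1) using 1; norm_num
    · exact phiF_zero _ (by norm_num)
    · rw [phiF_eval_neg le_rfl (by norm_num)]
  · rcases lt_trichotomy s 0 with h2 | h2 | h2
    · have he : ∀ᶠ x in nhds s, phiF x = (fun x : ℝ => 1 - 3*x^2 - 2*x^3) x := by
        filter_upwards [Ioo_mem_nhds h h2] with x hx
        exact phiF_eval_neg (le_of_lt hx.1) (le_of_lt hx.2)
      rw [DphiF_eval_neg (by linarith) (by linarith)]
      exact (cubic_neg s).congr_of_eventuallyEq he
    · subst h2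
      have hD : DphiF 0 = 0 := by norm_num [DphiF]
      rw [hD]
      apply glueDeriv (p := fun x => 1 - 3*x^2 - 2*x^3) (q := fun x => 1 - 3*x^2 + 2*x^3)
      · filter_upwards [self_mem_nhdsWithin,
          mem_nhdsWithin_of_mem_nhds (Ioi_mem_nhds (by norm_num : (-1:ℝ) < 0))] with x hx1 hx2
        exact phiF_eval_neg (le_of_lt hx2) hx1
      · filter_upwards [self_mem_nhdsWithin,
          mem_nhdsWithin_of_mem_nhds (Iio_mem_nhds (by norm_num : (0:ℝ) < 1))] with x hx1 hx2
        exact phiF_eval_pos' hx1 (le_of_lt hx2)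
      · convert cubic_neg 0 using 1; norm_num
      · convert cubic_pos 0 using 1; norm_num
      · rw [phiF_eval_neg (by norm_num) le_rfl]
      · rw [phiF_eval_pos' le_rfl (by norm_num)]
    · rcases lt_trichotomy s 1 with h3 | h3 | h3
      · have he : ∀ᶠ x in nhds s, phiF x = (fun x : ℝ => 1 - 3*x^2 + 2*x^3) x := by
          filter_upwards [Ioo_mem_nhds h2 h3] with x hx
          exact phiF_eval_pos hx.1 (le_of_lt hx.2)
        rw [DphiF_eval_pos h2 (le_of_lt h3)]
        exact (cubic_pos s).congr_of_eventuallyEq he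
      · subst h3
        rw [DphiF_zero 1 (by norm_num)]
        apply glueDeriv (p := fun x => 1 - 3*x^2 + 2*x^3) (q := fun _ => (0:ℝ))
        · filter_upwards [self_mem_nhdsWithin,
            mem_nhdsWithin_of_mem_nhds (Ioi_mem_nhds (by norm_num : (0:ℝ) < 1))] with x hx1 hx2
          exact phiF_eval_pos hx2 hx1
        · filter_upwards [self_mem_nhdsWithin] with x hx
          exact phiF_zero x (by rw [abs_of_pos (by linarith [mem_Ici.mp hx])]; exact hx)
        · convert cubic_pos 1 using 1; norm_num
        · exact hasDerivAt_const _ _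
        · rw [phiF_eval_pos (by norm_num) le_rfl]
        · exact phiF_zero _ (by norm_num)
      · have he : ∀ᶠ x in nhds s, phiF x = (fun _ : ℝ => (0:ℝ)) x := by
          filter_upwards [Ioi_mem_nhds h3] with x hx
          exact phiF_zero x (by rw [abs_of_pos (by linarith [mem_Ioi.mp hx])]; linarith [mem_Ioi.mp hx])
        rw [DphiF_zero s (by rw [abs_of_pos (by linarith)]; linarith)]
        exact (hasDerivAt_const s 0).congr_of_eventuallyEq he

lemma loc (m : ℕ) (hm : 1 ≤ m) {x : ℝ} (hx : x ∈ Icc (0:ℝ) 1) :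
    ∃ j : ℕ, j + 1 ≤ m ∧ ((m:ℝ) * x - j) ∈ Icc (0:ℝ) 1 ∧
      ∀ i : ℕ, i ≠ j → i ≠ j + 1 → 1 ≤ |(m:ℝ) * x - i| := by
  obtain ⟨hx0, hx1⟩ := hx
  have hmx0 : (0:ℝ) ≤ m * x := by positivity
  have hmx1 : (m:ℝ) * x ≤ m := by
    have hm' : (1:ℝ) ≤ m := by exact_mod_cast hm
    nlinarith
  by_cases hcase : (m:ℝ) * x < m
  · set n : ℕ := ⌊(m:ℝ) * x⌋.toNat with hn
    have hfl : (n : ℝ) = ⌊(m:ℝ) * x⌋ := by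
      rw [hn]; exact_mod_cast Int.toNat_of_nonneg (Int.floor_nonneg.mpr hmx0)
    have h1 : (n : ℝ) ≤ m * x := by rw [hfl]; exact Int.floor_le _
    have h2 : (m:ℝ) * x < n + 1 := by rw [hfl]; exact Int.lt_floor_add_one _
    have hnm : n + 1 ≤ m := by
      by_contra hc
      push_neg at hc
      have : (m:ℝ) ≤ n := by exact_mod_cast Nat.le_of_lt_succ (by omega)
      linarith
    refine ⟨n, hnm, ⟨by linarith, by linarith⟩, ?_⟩
    intro i hi1 hi2
    rcases lt_or_gt_of_ne hi1 with hlt | hgt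
    · have : (i:ℝ) + 1 ≤ n := by exact_mod_cast hlt
      rw [abs_of_nonneg (by linarith)]; linarith
    · have : (n:ℝ) + 2 ≤ i := by exact_mod_cast (by omega : n + 2 ≤ i)
      rw [abs_of_nonpos (by linarith)]; linarith
  · have heq : (m:ℝ) * x = m := le_antisymm hmx1 (not_lt.mp hcase)
    refine ⟨m - 1, by omega, ?_, ?_⟩
    · have : ((m - 1 : ℕ) : ℝ) = (m:ℝ) - 1 := by
        push_cast [Nat.cast_sub hm]; ring
      rw [heq, this]; constructor <;> linarith
    · intro i hi1 hi2
      have him : i ≠ m := by omega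
      rcases lt_or_gt_of_ne him with hlt | hgt
      · have hi' : i + 1 ≤ m - 1 := by omega
        have : (i:ℝ) + 1 ≤ (m:ℝ) - 1 := by
          have := (Nat.cast_le (α := ℝ)).mpr hi'
          push_cast [Nat.cast_sub hm] at this; linarith
        rw [heq, abs_of_nonneg (by linarith)]; linarith
      · have : (m:ℝ) + 1 ≤ i := by exact_mod_cast hgt
        rw [heq, abs_of_nonpos (by linarith)]; linarith

lemma sum_loc (m : ℕ) (c : ℕ → ℝ) (g : ℝ → ℝ) (hg : ∀ t, 1 ≤ |t| → g t = 0)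
    (x : ℝ) (j : ℕ) (hj : j + 1 ≤ m)
    (hloc : ∀ i : ℕ, i ≠ j → i ≠ j + 1 → 1 ≤ |(m:ℝ) * x - i|) :
    ∑ i ∈ Finset.range (m + 1), c i * g ((m:ℝ) * x - i)
      = c j * g ((m:ℝ) * x - j) + c (j + 1) * g ((m:ℝ) * x - (j + 1)) := by
  have hsub : ({j, j + 1} : Finset ℕ) ⊆ Finset.range (m + 1) := by
    intro i hi
    simp only [Finset.mem_insert, Finset.mem_singleton] at hi
    rcases hi with rfl | rfl <;> simp [Finset.mem_range] <;> omega
  rw [← Finset.sum_subset hsub]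
  · rw [Finset.sum_pair (by omega : j ≠ j + 1)]
    push_cast
    ring_nf
  · intro i _ hi
    simp only [Finset.mem_insert, Finset.mem_singleton] at hi
    push_neg at hi
    rw [hg _ (hloc i hi.1 hi.2), mul_zero]

lemma bsup_le {g : ℝ → ℝ} {C : ℝ} (hC : 0 ≤ C) (h : ∀ x ∈ Icc (0:ℝ) 1, |g x| ≤ C) :
    (⨆ x ∈ Icc (0:ℝ) 1, |g x|) ≤ C := by
  refine Real.iSup_le (fun x => Real.iSup_le (fun hx => h x hx) hC) hC

lemma le_bsup {g : ℝ → ℝ} {C : ℝ} (hC : ∀ x ∈ Icc (0:ℝ) 1, |g x| ≤ C) {y : ℝ}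
    (hy : y ∈ Icc (0:ℝ) 1) : |g y| ≤ ⨆ x ∈ Icc (0:ℝ) 1, |g x| := by
  have hbdd : BddAbove (Set.range fun x : ℝ => ⨆ _ : x ∈ Icc (0:ℝ) 1, |g x|) := by
    refine ⟨max C 0, ?_⟩
    rintro _ ⟨x, rfl⟩
    show (⨆ _ : x ∈ Icc (0:ℝ) 1, |g x|) ≤ max C 0
    by_cases hx : x ∈ Icc (0:ℝ) 1
    · rw [ciSup_pos hx]; exact le_max_of_le_left (hC x hx)
    · haveI : IsEmpty (x ∈ Icc (0:ℝ) 1 : Prop) := ⟨hx⟩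
      rw [Real.iSup_of_isEmpty]; exact le_max_right _ _
  calc |g y| = ⨆ _ : y ∈ Icc (0:ℝ) 1, |g y| := (ciSup_pos (f := fun _ => |g y|) hy).symm
    _ ≤ ⨆ x, ⨆ _ : x ∈ Icc (0:ℝ) 1, |g x| := le_ciSup hbdd y

lemma bsup_nonneg {g : ℝ → ℝ} {C : ℝ} (hC : ∀ x ∈ Icc (0:ℝ) 1, |g x| ≤ C) :
    0 ≤ ⨆ x ∈ Icc (0:ℝ) 1, |g x| :=
  le_trans (abs_nonneg _) (le_bsup hC ⟨le_rfl, zero_le_one⟩)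

lemma phiF_def (x : ℝ) : phiF x =
    if x < -1 then 0
    else if x ≤ 0 then 1 - 3 * x ^ 2 - 2 * x ^ 3
    else if x ≤ 1 then 1 - 3 * x ^ 2 + 2 * x ^ 3
    else 0 := rfl

/-- properties of the smooth integral-type projection
`Π̃_η f(x) = (∫f - I(f)) + ∫₀ˣ g̃`, with `g̃ = Σ_i f'(a_i)φ_i` and
`I(f) = Σ_i f'(a_i) ∫₀¹(∫₀ˣ φ_i)dx`, for `f ∈ C²([0,1])`:
(1) `‖f' - g̃‖_∞ ≤ ‖f''‖_∞/m`; (2) `‖Π̃_η f - f‖_∞ ≤ ‖f''‖_∞/m`;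
(3) `‖Π̃_η f - f‖_{C¹} ≤ 3‖f''‖_∞/m` (note `(Π̃_η f)' = g̃`);
(4) `∫₀¹ Π̃_η f = ∫₀¹ f`; (5) `‖Π̃_η f‖_{C²} ≤ 5‖f‖_{C²}`
(with `(Π̃_η f)' = g̃`, `(Π̃_η f)'' = g̃'`). -/
theorem stmt13
    (m : ℕ) (hm : 2 ≤ m)
    (φ : ℝ → ℝ)
    (hφ : ∀ x : ℝ, φ x =
      if x < -1 then 0
      else if x ≤ 0 then 1 - 3 * x ^ 2 - 2 * x ^ 3
      else if x ≤ 1 then 1 - 3 * x ^ 2 + 2 * x ^ 3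
      else 0)
    (f : ℝ → ℝ) (hf : ContDiff ℝ 2 f)
    (gt : ℝ → ℝ)
    (hgt : ∀ x, gt x = ∑ i ∈ Finset.range (m + 1), deriv f (i / m) * φ (m * x - i))
    (If : ℝ)
    (hIf : If = ∑ i ∈ Finset.range (m + 1),
      deriv f (i / m) * ∫ x in (0:ℝ)..1, ∫ t in (0:ℝ)..x, φ (m * t - i))
    (Pf : ℝ → ℝ)
    (hPf : ∀ x, Pf x = ((∫ t in (0:ℝ)..1, f t) - If) + ∫ t in (0:ℝ)..x, gt t) :
    (∀ x ∈ Icc (0:ℝ) 1,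
      |deriv f x - gt x| ≤ (⨆ y ∈ Icc (0:ℝ) 1, |deriv (deriv f) y|) / m) ∧
    (∀ x ∈ Icc (0:ℝ) 1,
      |Pf x - f x| ≤ (⨆ y ∈ Icc (0:ℝ) 1, |deriv (deriv f) y|) / m) ∧
    ((⨆ x ∈ Icc (0:ℝ) 1, |Pf x - f x|) + (⨆ x ∈ Icc (0:ℝ) 1, |gt x - deriv f x|)
      ≤ 3 * (⨆ y ∈ Icc (0:ℝ) 1, |deriv (deriv f) y|) / m) ∧
    ((∫ t in (0:ℝ)..1, Pf t) = ∫ t in (0:ℝ)..1, f t) ∧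
    ((⨆ x ∈ Icc (0:ℝ) 1, |Pf x|) + (⨆ x ∈ Icc (0:ℝ) 1, |gt x|)
        + (⨆ x ∈ Icc (0:ℝ) 1, |deriv gt x|)
      ≤ 5 * ((⨆ y ∈ Icc (0:ℝ) 1, |f y|) + (⨆ y ∈ Icc (0:ℝ) 1, |deriv f y|)
          + ⨆ y ∈ Icc (0:ℝ) 1, |deriv (deriv f) y|)) := by
  have hφF : φ = phiF := funext fun x => by rw [hφ x, phiF_def x]
  subst hφF
  have hm1 : 1 ≤ m := by omega
  have hm0 : (0:ℝ) < m := by exact_mod_cast (by omega : 0 < m)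
  have hm0' : (1:ℝ) ≤ m := by exact_mod_cast hm1
  -- smoothness of f
  have hfc : Continuous f := hf.continuous
  have hdf : Differentiable ℝ f := hf.differentiable (by norm_num)
  have hf1 : ContDiff ℝ 1 (deriv f) := by
    have h : ContDiff ℝ ((1:WithTop ℕ∞) + 1) f := by
      rw [show ((1:WithTop ℕ∞) + 1) = 2 by norm_num]
      exact hf
    exact (contDiff_succ_iff_deriv.mp h).2.2
  have hdf' : Differentiable ℝ (deriv f) := hf1.differentiable one_ne_zero
  have hcf' : Continuous (deriv f) := hdf'.continuous
  have hcf'' : Continuous (deriv (deriv f)) := hf1.continuous_deriv le_rfl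
  -- the sup constants
  obtain ⟨C0, hC0⟩ := isCompact_Icc.exists_bound_of_continuousOn
    (hfc.continuousOn : ContinuousOn f (Icc (0:ℝ) 1))
  obtain ⟨C1, hC1⟩ := isCompact_Icc.exists_bound_of_continuousOn
    (hcf'.continuousOn : ContinuousOn (deriv f) (Icc (0:ℝ) 1))
  obtain ⟨C2, hC2⟩ := isCompact_Icc.exists_bound_of_continuousOn
    (hcf''.continuousOn : ContinuousOn (deriv (deriv f)) (Icc (0:ℝ) 1))
  simp only [Real.norm_eq_abs] at hC0 hC1 hC2
  set M0 := ⨆ y ∈ Icc (0:ℝ) 1, |f y| with hM0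
  set M1 := ⨆ y ∈ Icc (0:ℝ) 1, |deriv f y| with hM1
  set M2 := ⨆ y ∈ Icc (0:ℝ) 1, |deriv (deriv f) y| with hM2
  have hM0b : ∀ y ∈ Icc (0:ℝ) 1, |f y| ≤ M0 := fun y hy => le_bsup hC0 hy
  have hM1b : ∀ y ∈ Icc (0:ℝ) 1, |deriv f y| ≤ M1 := fun y hy => le_bsup hC1 hy
  have hM2b : ∀ y ∈ Icc (0:ℝ) 1, |deriv (deriv f) y| ≤ M2 := fun y hy => le_bsup hC2 hy
  have hM0nn : 0 ≤ M0 := bsup_nonneg hC0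
  have hM1nn : 0 ≤ M1 := bsup_nonneg hC1
  have hM2nn : 0 ≤ M2 := bsup_nonneg hC2
  -- Lipschitz bound for deriv f
  have hlip : ∀ a ∈ Icc (0:ℝ) 1, ∀ b ∈ Icc (0:ℝ) 1,
      |deriv f b - deriv f a| ≤ M2 * |b - a| := by
    intro a ha b hb
    have := Convex.norm_image_sub_le_of_norm_deriv_le (f := deriv f) (s := Icc (0:ℝ) 1)
      (fun x _ => hdf' x) (fun x hx => by simpa using hM2b x hx) (convex_Icc 0 1) ha hb
    simpa [Real.norm_eq_abs] using this
  -- phiF basics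
  have hphidiff : Differentiable ℝ phiF := fun s => (phiF_hasDerivAt s).differentiableAt
  have hphiC : Continuous phiF := hphidiff.continuous
  set c : ℕ → ℝ := fun i => deriv f ((i:ℝ) / m) with hcdef
  have hgt_fun : gt = fun x => ∑ i ∈ Finset.range (m+1), c i * phiF ((m:ℝ)*x - i) :=
    funext fun x => hgt x
  -- derivative of gt
  have hgtD : ∀ x, HasDerivAt gt
      (∑ i ∈ Finset.range (m+1), (c i * m) * DphiF ((m:ℝ)*x - i)) x := by
    intro x
    rw [hgt_fun]
    apply HasDerivAt.fun_sum
    intro i _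
    have ha : HasDerivAt (fun x : ℝ => (m:ℝ)*x - i) m x := by
      simpa using ((hasDerivAt_id x).const_mul (m:ℝ)).sub_const (i:ℝ)
    have h2 := ((phiF_hasDerivAt ((m:ℝ)*x - i)).comp x ha).const_mul (c i)
    refine h2.congr_deriv ?_
    ring
  have hgtdiff : Differentiable ℝ gt := fun x => (hgtD x).differentiableAt
  have hgtcont : Continuous gt := hgtdiff.continuous
  have hderiv_gt : ∀ x, deriv gt x
      = ∑ i ∈ Finset.range (m+1), (c i * m) * DphiF ((m:ℝ)*x - i) :=
    fun x => (hgtD x).deriv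
  -- derivative of Pf
  have hPfD : ∀ x, HasDerivAt Pf (gt x) x := by
    intro x
    have h1 : HasDerivAt (fun u => ∫ t in (0:ℝ)..u, gt t) (gt x) x :=
      (hgtcont.integral_hasStrictDerivAt 0 x).hasDerivAt
    have h2 := (hasDerivAt_const x ((∫ t in (0:ℝ)..1, f t) - If)).add h1
    rw [zero_add] at h2
    have : Pf = fun x => ((∫ t in (0:ℝ)..1, f t) - If) + ∫ t in (0:ℝ)..x, gt t :=
      funext hPf
    rw [this]
    exact h2
  have hPfdiff : Differentiable ℝ Pf := fun x => (hPfD x).differentiableAt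
  have hPfcont : Continuous Pf := hPfdiff.continuous
  -- part 1
  have part1 : ∀ x ∈ Icc (0:ℝ) 1, |deriv f x - gt x| ≤ M2 / m := by
    intro x hx
    obtain ⟨j, hj, hs, hlc⟩ := loc m hm1 hx
    set s : ℝ := (m:ℝ) * x - j with hsdef
    have hsum : gt x = c j * phiF s + c (j+1) * phiF (s - 1) := by
      rw [hgt x, sum_loc m c phiF phiF_zero x j hj hlc]
      rw [hsdef]
      push_cast
      ring_nf
    have hjm : (j:ℝ) / m ∈ Icc (0:ℝ) 1 := by
      constructor
      · positivity
      · rw [div_le_one hm0]; exact_mod_cast (by omega : j ≤ m)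
    have hj1m : ((j:ℝ) + 1) / m ∈ Icc (0:ℝ) 1 := by
      constructor
      · positivity
      · rw [div_le_one hm0]; exact_mod_cast hj
    have hxj : |x - (j:ℝ)/m| ≤ 1 / m := by
      have he : x - (j:ℝ)/m = s / m := by field_simp; rw [hsdef]; ring
      rw [he, abs_of_nonneg (div_nonneg hs.1 hm0.le)]
      gcongr
      · exact hs.2
    have hxj1 : |x - ((j:ℝ)+1)/m| ≤ 1 / m := by
      have he : x - ((j:ℝ)+1)/m = (s - 1) / m := by field_simp; ring
      rw [he, abs_div, abs_of_pos hm0, abs_of_nonpos (by linarith [hs.2]), neg_sub]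
      gcongr
      · linarith [hs.1]
    have hbj : |deriv f x - c j| ≤ M2 / m := by
      have := hlip ((j:ℝ)/m) hjm x hx
      calc |deriv f x - c j| ≤ M2 * |x - (j:ℝ)/m| := this
        _ ≤ M2 * (1/m) := by gcongr
        _ = M2 / m := by ring
    have hbj1 : |deriv f x - c (j+1)| ≤ M2 / m := by
      have := hlip (((j:ℝ)+1)/m) hj1m x hx
      have hcc : c (j+1) = deriv f (((j:ℝ)+1)/m) := by rw [hcdef]; push_cast; ring_nf
      rw [hcc]
      calc |deriv f x - deriv f (((j:ℝ)+1)/m)| ≤ M2 * |x - ((j:ℝ)+1)/m| := this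
        _ ≤ M2 * (1/m) := by gcongr
        _ = M2 / m := by ring
    have hdx : deriv f x - gt x
        = (deriv f x - c j) * phiF s + (deriv f x - c (j+1)) * phiF (s-1) := by
      have h1 := phiF_add hs
      rw [hsum]; linear_combination (-(deriv f x)) * h1
    rw [hdx]
    have h1 := phiF_nonneg s
    have h2 := phiF_nonneg (s-1)
    have h3 := phiF_add hs
    calc |(deriv f x - c j) * phiF s + (deriv f x - c (j+1)) * phiF (s-1)|
        ≤ |(deriv f x - c j) * phiF s| + |(deriv f x - c (j+1)) * phiF (s-1)| := abs_add_le _ _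
      _ = |deriv f x - c j| * phiF s + |deriv f x - c (j+1)| * phiF (s-1) := by
          rw [abs_mul, abs_mul, abs_of_nonneg h1, abs_of_nonneg h2]
      _ ≤ (M2/m) * phiF s + (M2/m) * phiF (s-1) := by gcongr
      _ = M2/m := by rw [← mul_add, h3, mul_one]
  -- part 4
  have hG : ∀ x : ℝ, (∫ t in (0:ℝ)..x, gt t)
      = ∑ i ∈ Finset.range (m+1), c i * ∫ t in (0:ℝ)..x, phiF ((m:ℝ)*t - i) := by
    intro x
    rw [hgt_fun]
    rw [intervalIntegral.integral_finset_sum (fun i _ =>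
      (Continuous.intervalIntegrable (by fun_prop) 0 x))]
    exact Finset.sum_congr rfl fun i _ => intervalIntegral.integral_const_mul _ _
  have part4 : (∫ t in (0:ℝ)..1, Pf t) = ∫ t in (0:ℝ)..1, f t := by
    have hPfeq : Pf = fun x => ((∫ t in (0:ℝ)..1, f t) - If) + ∫ t in (0:ℝ)..x, gt t :=
      funext hPf
    have hGcont : Continuous (fun x : ℝ => ∫ t in (0:ℝ)..x, gt t) := by
      have : Differentiable ℝ (fun x : ℝ => ∫ t in (0:ℝ)..x, gt t) := fun x =>
        ((hgtcont.integral_hasStrictDerivAt 0 x).hasDerivAt).differentiableAt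
      exact this.continuous
    have hIG : (∫ x in (0:ℝ)..1, ∫ t in (0:ℝ)..x, gt t) = If := by
      have h1 : (∫ x in (0:ℝ)..1, ∫ t in (0:ℝ)..x, gt t)
          = ∫ x in (0:ℝ)..1, ∑ i ∈ Finset.range (m+1),
              c i * ∫ t in (0:ℝ)..x, phiF ((m:ℝ)*t - i) := by
        exact intervalIntegral.integral_congr fun x _ => hG x
      rw [h1, intervalIntegral.integral_finset_sum]
      · rw [hIf]
        refine Finset.sum_congr rfl fun i _ => ?_
        rw [intervalIntegral.integral_const_mul]
      · intro i _
        refine Continuous.intervalIntegrable ?_ 0 1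
        have : Differentiable ℝ (fun x : ℝ => ∫ t in (0:ℝ)..x, phiF ((m:ℝ)*t - i)) := by
          intro x
          exact (((by fun_prop : Continuous (fun t : ℝ => phiF ((m:ℝ)*t - i))).integral_hasStrictDerivAt
            0 x).hasDerivAt).differentiableAt
        exact Continuous.mul continuous_const this.continuous
    rw [hPfeq]
    rw [intervalIntegral.integral_add (intervalIntegrable_const)
      (hGcont.intervalIntegrable 0 1)]
    rw [intervalIntegral.integral_const, hIG]
    simp
  -- part 2
  have hint0 : (∫ t in (0:ℝ)..1, (Pf t - f t)) = 0 := by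
    rw [intervalIntegral.integral_sub (hPfcont.intervalIntegrable 0 1)
      (hfc.intervalIntegrable 0 1), part4, sub_self]
  have hhd : ∀ y, HasDerivAt (fun t => Pf t - f t) (gt y - deriv f y) y :=
    fun y => (hPfD y).sub (hdf y).hasDerivAt
  have hhlip : ∀ a ∈ Icc (0:ℝ) 1, ∀ b ∈ Icc (0:ℝ) 1,
      |(Pf b - f b) - (Pf a - f a)| ≤ (M2/m) * |b - a| := by
    intro a ha b hb
    have := Convex.norm_image_sub_le_of_norm_deriv_le (f := fun t => Pf t - f t)
      (s := Icc (0:ℝ) 1) (fun x _ => (hhd x).differentiableAt)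
      (fun x hx => by
        rw [(hhd x).deriv]
        simpa [Real.norm_eq_abs, abs_sub_comm] using part1 x hx)
      (convex_Icc 0 1) ha hb
    simpa [Real.norm_eq_abs] using this
  have part2 : ∀ x ∈ Icc (0:ℝ) 1, |Pf x - f x| ≤ M2 / m := by
    intro x hx
    have key : Pf x - f x = ∫ t in (0:ℝ)..1, ((Pf x - f x) - (Pf t - f t)) := by
      rw [intervalIntegral.integral_sub (g := fun t => Pf t - f t) intervalIntegrable_const
        ((hPfcont.sub hfc).intervalIntegrable 0 1)]
      rw [intervalIntegral.integral_const, hint0]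
      simp
    have hM2m : (0:ℝ) ≤ M2 / m := div_nonneg hM2nn hm0.le
    calc |Pf x - f x| = |∫ t in (0:ℝ)..1, ((Pf x - f x) - (Pf t - f t))| := by rw [← key]
      _ ≤ (M2/m) * |1 - 0| := by
          refine intervalIntegral.norm_integral_le_of_norm_le_const (E := ℝ) ?_
          intro t ht
          rw [uIoc_of_le zero_le_one] at ht
          have ht' : t ∈ Icc (0:ℝ) 1 := ⟨ht.1.le, ht.2⟩
          have := hhlip t ht' x hx
          have hxt : |x - t| ≤ 1 := by
            rw [abs_le]
            constructor <;> [linarith [hx.1, ht'.2]; linarith [hx.2, ht'.1]]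
          calc ‖(Pf x - f x) - (Pf t - f t)‖ = |(Pf x - f x) - (Pf t - f t)| := rfl
            _ ≤ (M2/m) * |x - t| := this
            _ ≤ (M2/m) * 1 := by gcongr
            _ = (M2/m) := mul_one _
      _ = M2/m := by norm_num
  have hM2m : (0:ℝ) ≤ M2 / m := div_nonneg hM2nn hm0.le
  refine ⟨part1, part2, ?_, part4, ?_⟩
  · -- part 3
    have s1 : (⨆ x ∈ Icc (0:ℝ) 1, |Pf x - f x|) ≤ M2/m := bsup_le hM2m part2
    have s2 : (⨆ x ∈ Icc (0:ℝ) 1, |gt x - deriv f x|) ≤ M2/m :=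
      bsup_le hM2m (fun x hx => by rw [abs_sub_comm]; exact part1 x hx)
    have : 3 * M2 / m = 3 * (M2 / m) := by ring
    rw [this]
    linarith
  · -- part 5
    have sA : (⨆ x ∈ Icc (0:ℝ) 1, |Pf x|) ≤ M0 + M2 := by
      refine bsup_le (by linarith) (fun x hx => ?_)
      have h1 : |Pf x| ≤ |Pf x - f x| + |f x| := by
        calc |Pf x| = |(Pf x - f x) + f x| := by ring_nf
          _ ≤ |Pf x - f x| + |f x| := abs_add_le _ _
      have h2 := part2 x hx
      have h3 := hM0b x hx
      have h4 : M2 / m ≤ M2 := div_le_self hM2nn hm0'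
      linarith
    have sB : (⨆ x ∈ Icc (0:ℝ) 1, |gt x|) ≤ M1 := by
      refine bsup_le hM1nn (fun x hx => ?_)
      obtain ⟨j, hj, hs, hlc⟩ := loc m hm1 hx
      set s : ℝ := (m:ℝ) * x - j with hsdef
      have hsum : gt x = c j * phiF s + c (j+1) * phiF (s - 1) := by
        rw [hgt x, sum_loc m c phiF phiF_zero x j hj hlc]
        rw [hsdef]
        push_cast
        ring_nf
      have hjm : (j:ℝ) / m ∈ Icc (0:ℝ) 1 := by
        constructor
        · positivity
        · rw [div_le_one hm0]; exact_mod_cast (by omega : j ≤ m)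
      have hj1m : ((j:ℝ) + 1) / m ∈ Icc (0:ℝ) 1 := by
        constructor
        · positivity
        · rw [div_le_one hm0]; exact_mod_cast hj
      have hcj : |c j| ≤ M1 := hM1b _ hjm
      have hcj1 : |c (j+1)| ≤ M1 := by
        have hcc : c (j+1) = deriv f (((j:ℝ)+1)/m) := by rw [hcdef]; push_cast; ring_nf
        rw [hcc]; exact hM1b _ hj1m
      have h1 := phiF_nonneg s
      have h2 := phiF_nonneg (s-1)
      have h3 := phiF_add hs
      calc |gt x| = |c j * phiF s + c (j+1) * phiF (s-1)| := by rw [hsum]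
        _ ≤ |c j * phiF s| + |c (j+1) * phiF (s-1)| := abs_add_le _ _
        _ = |c j| * phiF s + |c (j+1)| * phiF (s-1) := by
            rw [abs_mul, abs_mul, abs_of_nonneg h1, abs_of_nonneg h2]
        _ ≤ M1 * phiF s + M1 * phiF (s-1) := by gcongr
        _ = M1 := by rw [← mul_add, h3, mul_one]
    have sC : (⨆ x ∈ Icc (0:ℝ) 1, |deriv gt x|) ≤ 3/2 * M2 := by
      refine bsup_le (by linarith) (fun x hx => ?_)
      obtain ⟨j, hj, hs, hlc⟩ := loc m hm1 hx
      set s : ℝ := (m:ℝ) * x - j with hsdef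
      have hsum : deriv gt x = (c j * m) * DphiF s + (c (j+1) * m) * DphiF (s - 1) := by
        rw [hderiv_gt x, sum_loc m (fun i => c i * m) DphiF DphiF_zero x j hj hlc]
        rw [hsdef]
        push_cast
        ring_nf
      have hjm : (j:ℝ) / m ∈ Icc (0:ℝ) 1 := by
        constructor
        · positivity
        · rw [div_le_one hm0]; exact_mod_cast (by omega : j ≤ m)
      have hj1m : ((j:ℝ) + 1) / m ∈ Icc (0:ℝ) 1 := by
        constructor
        · positivity
        · rw [div_le_one hm0]; exact_mod_cast hj
      have hD : DphiF s = -DphiF (s-1) := by linarith [DphiF_add hs]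
      have hcc : c (j+1) = deriv f (((j:ℝ)+1)/m) := by rw [hcdef]; push_cast; ring_nf
      have hdiff : |c (j+1) - c j| ≤ M2 / m := by
        have := hlip ((j:ℝ)/m) hjm (((j:ℝ)+1)/m) hj1m
        have he : ((j:ℝ)+1)/m - (j:ℝ)/m = 1/m := by rw [← sub_div]; congr 1; ring
        rw [he] at this
        rw [hcc]
        calc |deriv f (((j:ℝ)+1)/m) - c j| ≤ M2 * |1/(m:ℝ)| := this
          _ = M2 / m := by rw [abs_of_pos (one_div_pos.mpr hm0)]; ring
      have hDb := DphiF_abs_le (s-1)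
      have hexp : deriv gt x = (m:ℝ) * ((c (j+1) - c j) * DphiF (s-1)) := by
        rw [hsum, hD]; ring
      calc |deriv gt x| = (m:ℝ) * (|c (j+1) - c j| * |DphiF (s-1)|) := by
            rw [hexp, abs_mul, abs_mul, abs_of_pos hm0]
        _ ≤ (m:ℝ) * ((M2/m) * (3/2)) := by
            gcongr
        _ = 3/2 * M2 := by field_simp
    calc (⨆ x ∈ Icc (0:ℝ) 1, |Pf x|) + (⨆ x ∈ Icc (0:ℝ) 1, |gt x|)
          + (⨆ x ∈ Icc (0:ℝ) 1, |deriv gt x|)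
        ≤ (M0 + M2) + M1 + 3/2 * M2 := add_le_add (add_le_add sA sB) sC
        _ ≤ 5 * (M0 + M1 + M2) := by linarith
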